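/- arXiv:1806.11007 — 5 statements merged into one kernel-verified Lean document; each statement's English description precedes it below -/
import Mathlib

section
/- If v ⊑_LU v' and v(x) - v(y) < c for a guard x - y ◁ c with L(x-y) ≤ c ≤ U(x-y), then v'(x) - v'(y) < c (and similarly for non-strict guards): any guard compatible with the LU-bounds that is satisfied by v is also satisfied by v'. -/
/-- The LU-preorder: `v ⊑_LU v'` iff for every pair of distinct clocks `x, y`,
if `v x - v y < L x y` then `v' x - v' y < L x y`, and
if `L x y ≤ v x - v y ≤ U x y` then `v' x - v' y ≤ v x - v y`. -/
def LUsim {X : Type*} (L U : X → X → EReal) (v v' : X → ℝ) : Prop :=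
  ∀ x y : X, x ≠ y →
    (((v x - v y : ℝ) : EReal) < L x y → ((v' x - v' y : ℝ) : EReal) < L x y) ∧
    ((L x y ≤ ((v x - v y : ℝ) : EReal) ∧ ((v x - v y : ℝ) : EReal) ≤ U x y) →
      v' x - v' y ≤ v x - v y)

/-- Any guard `x - y ◁ c` compatible with the LU-bounds (`L(x-y) ≤ c ≤ U(x-y)`)
that is satisfied by `v` is also satisfied by `v'`, whenever `v ⊑_LU v'`. -/
theorem lu_sim_preserves_guards {X : Type*} (L U : X → X → EReal) (v v' : X → ℝ)
    (h : LUsim L U v v') (x y : X) (hxy : x ≠ y) (c : ℤ)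
    (hL : L x y ≤ ((c : ℝ) : EReal)) (hU : ((c : ℝ) : EReal) ≤ U x y) :
    (v x - v y < (c : ℝ) → v' x - v' y < (c : ℝ)) ∧
    (v x - v y ≤ (c : ℝ) → v' x - v' y ≤ (c : ℝ)) := by
  obtain ⟨h1, h2⟩ := h x y hxy
  have key : ∀ hv : v x - v y ≤ (c : ℝ), v' x - v' y ≤ (c : ℝ) ∧
      (v x - v y < (c : ℝ) → v' x - v' y < (c : ℝ)) := by
    intro hv
    rcases lt_or_ge (((v x - v y : ℝ) : EReal)) (L x y) with hlt | hge
    · have hv' := h1 hlt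
      have hv'' : ((v' x - v' y : ℝ) : EReal) < ((c : ℝ) : EReal) := lt_of_lt_of_le hv' hL
      have : v' x - v' y < (c : ℝ) := by exact_mod_cast hv''
      exact ⟨this.le, fun _ => this⟩
    · have hle : ((v x - v y : ℝ) : EReal) ≤ U x y :=
        le_trans (by exact_mod_cast hv) hU
      have := h2 ⟨hge, hle⟩
      exact ⟨this.trans hv, fun hlt' => lt_of_le_of_lt this hlt'⟩
  constructor
  · intro hv
    exact (key hv.le).2 hv
  · intro hv
    exact (key hv).1
end

section
/- A distance graph has a nonempty solution set iff it has no negative cycle: ⟦G⟧ ≠ ∅ if and only if every cycle in G has weight sum strictly greater than (<, 0). -/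
/-- Weights `(◁, c)` modelled as `Bool × EReal` (`true` = strict). -/
def wsat (r : ℝ) (w : Bool × EReal) : Prop :=
  if w.1 then ((r : EReal) < w.2) else ((r : EReal) ≤ w.2)

/-- Strict order on weights. -/
def wlt (w₁ w₂ : Bool × EReal) : Prop :=
  w₁.2 < w₂.2 ∨ (w₁.2 = w₂.2 ∧ w₁.1 = true ∧ w₂.1 = false)

/-- Weight addition: constants add, result strict iff some summand is strict. -/
noncomputable def wadd (w₁ w₂ : Bool × EReal) : Bool × EReal := (w₁.1 || w₂.1, w₁.2 + w₂.2)

/-- The weight of the path `a → c₁ → ⋯ → cₖ → b` through the graph `G`. -/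
noncomputable def pathW {V : Type*} (G : V → V → Bool × EReal) : V → List V → V → Bool × EReal
  | a, [], b => G a b
  | a, c :: l, b => wadd (G a c) (pathW G c l b)

/-- `⟦G⟧`: valuations with the zero vertex `z` at `0` satisfying all edge constraints. -/
def sem {V : Type*} (z : V) (G : V → V → Bool × EReal) : Set (V → ℝ) :=
  {v | v z = 0 ∧ ∀ x y : V, wsat (v y - v x) (G x y)}

-- forward direction helpers

lemma wsat_wadd {r s : ℝ} {w₁ w₂ : Bool × EReal} (h₁ : wsat r w₁) (h₂ : wsat s w₂) :
    wsat (r + s) (wadd w₁ w₂) := by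
  unfold wsat at h₁ h₂
  have hb1 : w₁.2 ≠ ⊥ := by
    intro h; split at h₁ <;> simp [h] at h₁
  have hb2 : w₂.2 ≠ ⊥ := by
    intro h; split at h₂ <;> simp [h] at h₂
  unfold wsat wadd
  simp only
  by_cases ht1 : w₁.2 = ⊤
  · have hs : w₁.2 + w₂.2 = ⊤ := by rw [ht1]; exact EReal.top_add_of_ne_bot hb2
    rw [hs]
    split
    · exact EReal.coe_lt_top _
    · exact le_top
  by_cases ht2 : w₂.2 = ⊤
  · have hs : w₁.2 + w₂.2 = ⊤ := by rw [ht2]; exact EReal.add_top_of_ne_bot hb1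
    rw [hs]
    split
    · exact EReal.coe_lt_top _
    · exact le_top
  obtain ⟨c₁, hc₁⟩ : ∃ c : ℝ, w₁.2 = (c : EReal) := by
    lift w₁.2 to ℝ using ⟨ht1, hb1⟩ with c; exact ⟨c, rfl⟩
  obtain ⟨c₂, hc₂⟩ : ∃ c : ℝ, w₂.2 = (c : EReal) := by
    lift w₂.2 to ℝ using ⟨ht2, hb2⟩ with c; exact ⟨c, rfl⟩
  rw [hc₁] at h₁; rw [hc₂] at h₂; rw [hc₁, hc₂]
  rw [← EReal.coe_add]
  rcases Bool.eq_false_or_eq_true w₁.1 with hB1 | hB1 <;>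
    rcases Bool.eq_false_or_eq_true w₂.1 with hB2 | hB2 <;>
      simp only [hB1, hB2, if_true, if_false, EReal.coe_lt_coe_iff, EReal.coe_le_coe_iff,
        Bool.or_true, Bool.true_or, Bool.or_false, Bool.false_or, Bool.false_eq_true,
        Bool.true_eq_false, ite_true, ite_false] at h₁ h₂ ⊢ <;>
    [exact add_lt_add h₁ h₂; exact add_lt_add_of_lt_of_le h₁ h₂;
     exact add_lt_add_of_le_of_lt h₁ h₂; exact add_le_add h₁ h₂]

lemma wsat_pathW {V : Type*} {G : V → V → Bool × EReal} {v : V → ℝ}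
    (hv : ∀ x y : V, wsat (v y - v x) (G x y)) :
    ∀ (a : V) (l : List V) (b : V), wsat (v b - v a) (pathW G a l b) := by
  intro a l
  induction l generalizing a with
  | nil => intro b; exact hv a b
  | cons c l ih =>
    intro b
    have := wsat_wadd (hv a c) (ih c b)
    have heq : v c - v a + (v b - v c) = v b - v a := by ring
    rw [heq] at this
    exact this

section Backward

variable {V : Type*} (G : V → V → Bool × EReal)

/-- finite edge -/
def Efin (x y : V) : Prop := (G x y).2 ≠ ⊤

open scoped Classical in
/-- the integer constant of an edge -/
noncomputable def cInt (x y : V) : ℤ :=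
  if h : ∃ c : ℤ, (G x y).2 = ((c : ℝ) : EReal) then h.choose else 0

noncomputable def eps (V : Type*) [Fintype V] : ℝ := 1 / (Fintype.card V + 1)

lemma eps_pos (V : Type*) [Fintype V] : 0 < eps V := by
  unfold eps; positivity

lemma card_mul_eps_lt_one (V : Type*) [Fintype V] : (Fintype.card V : ℝ) * eps V < 1 := by
  unfold eps
  rw [mul_one_div, div_lt_one (by positivity)]
  linarith

variable [Fintype V]

/-- real cost of an edge -/
noncomputable def ecost (x y : V) : ℝ :=
  (cInt G x y : ℝ) - (if (G x y).1 then eps V else 0)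

/-- real cost of a path -/
noncomputable def rpath : V → List V → V → ℝ
  | a, [], b => ecost G a b
  | a, c :: l, b => ecost G a c + rpath c l b

variable {G}

lemma cInt_spec (hG : ∀ x y : V, (∃ c : ℤ, (G x y).2 = ((c : ℝ) : EReal)) ∨ G x y = (true, ⊤))
    {x y : V} (h : Efin G x y) : (G x y).2 = ((cInt G x y : ℝ) : EReal) := by
  rcases hG x y with hc | htop
  · classical
    unfold cInt
    rw [dif_pos hc]
    exact hc.choose_spec
  · exact absurd (by rw [htop]) h

lemma ecost_le (x y : V) : ecost G x y ≤ (cInt G x y : ℝ) := by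
  unfold ecost
  have := eps_pos V
  split <;> simp <;> linarith

lemma le_ecost (x y : V) : (cInt G x y : ℝ) - eps V ≤ ecost G x y := by
  unfold ecost
  have := eps_pos V
  split <;> simp <;> linarith

lemma ecost_eq (x y : V) (h : (G x y).1 = false) : ecost G x y = (cInt G x y : ℝ) := by
  unfold ecost; rw [h]; simp

/-- the integer constant of a path -/
noncomputable def pSum (G : V → V → Bool × EReal) : V → List V → V → ℤ
  | a, [], b => cInt G a b
  | a, c :: l, b => cInt G a c + pSum G c l b

lemma pathW_snd (hG : ∀ x y : V, (∃ c : ℤ, (G x y).2 = ((c : ℝ) : EReal)) ∨ G x y = (true, ⊤)) :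
    ∀ (a : V) (l : List V) (b : V), List.Chain (Efin G) a (l ++ [b]) →
      (pathW G a l b).2 = (((pSum G a l b : ℤ) : ℝ) : EReal) := by
  intro a l
  induction l generalizing a with
  | nil =>
    intro b h
    rw [List.nil_append] at h
    change List.IsChain (Efin G) [a, b] at h
    rw [List.chain_cons] at h
    exact cInt_spec hG h.1
  | cons c l ih =>
    intro b h
    rw [List.cons_append] at h
    change List.IsChain (Efin G) (a :: c :: (l ++ [b])) at h
    rw [List.chain_cons] at h
    show ((G a c).2 + (pathW G c l b).2) = _
    rw [cInt_spec hG h.1, ih c b h.2]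
    show _ = (((cInt G a c + pSum G c l b : ℤ) : ℝ) : EReal)
    push_cast
    rw [← EReal.coe_add]

lemma rpath_bounds :
    ∀ (a : V) (l : List V) (b : V),
      ((pSum G a l b : ℝ) - (l.length + 1) * eps V ≤ rpath G a l b)
        ∧ rpath G a l b ≤ (pSum G a l b : ℝ) := by
  intro a l
  induction l generalizing a with
  | nil =>
    intro b
    constructor
    · simpa [pSum, rpath] using le_ecost (G := G) a b
    · exact ecost_le a b
  | cons c l ih =>
    intro b
    obtain ⟨ih1, ih2⟩ := ih c b
    constructor
    · show _ ≤ ecost G a c + rpath G c l b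
      have := le_ecost (G := G) a c
      show ((cInt G a c + pSum G c l b : ℤ) : ℝ) - (↑(c :: l).length + 1) * eps V ≤ _
      push_cast
      simp only [List.length_cons] at *
      push_cast at *
      nlinarith [eps_pos V]
    · show ecost G a c + rpath G c l b ≤ ((cInt G a c + pSum G c l b : ℤ) : ℝ)
      have := ecost_le (G := G) a c
      push_cast
      linarith

lemma rpath_eq_of_false :
    ∀ (a : V) (l : List V) (b : V), (pathW G a l b).1 = false →
      rpath G a l b = (pSum G a l b : ℝ) := by
  intro a l
  induction l generalizing a with
  | nil => intro b h; exact ecost_eq a b h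
  | cons c l ih =>
    intro b h
    have h' : ((G a c).1 || (pathW G c l b).1) = false := h
    rw [Bool.or_eq_false_iff] at h'
    show ecost G a c + rpath G c l b = ((cInt G a c + pSum G c l b : ℤ) : ℝ)
    rw [ecost_eq a c h'.1, ih c b h'.2]
    push_cast
    ring

/-- a simple cycle with all edges finite has nonnegative real cost -/
lemma cycle_nonneg (hG : ∀ x y : V, (∃ c : ℤ, (G x y).2 = ((c : ℝ) : EReal)) ∨ G x y = (true, ⊤))
    (hcyc : ∀ (a : V) (l : List V), wlt (true, (0 : EReal)) (pathW G a l a))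
    (a : V) (l : List V) (hfin : List.Chain (Efin G) a (l ++ [a]))
    (hnd : (a :: l).Nodup) : 0 ≤ rpath G a l a := by
  have hsnd := pathW_snd hG a l a hfin
  obtain ⟨hlow, hup⟩ := rpath_bounds (G := G) a l a
  rcases hcyc a l with hlt | ⟨heq, -, hfalse⟩
  · have hlt0 : (0 : EReal) < (pathW G a l a).2 := hlt
    rw [hsnd] at hlt0
    have h0 : (0 : ℝ) < ((pSum G a l a : ℤ) : ℝ) := by exact_mod_cast hlt0
    have h1 : (1 : ℝ) ≤ ((pSum G a l a : ℤ) : ℝ) := by exact_mod_cast h0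
    have hlen : (l.length + 1 : ℝ) ≤ (Fintype.card V : ℝ) := by
      have := hnd.length_le_card
      simp only [List.length_cons] at this
      exact_mod_cast this
    have := card_mul_eps_lt_one V
    have hep := eps_pos V
    nlinarith
  · have heq0 : (0 : EReal) = (pathW G a l a).2 := heq
    rw [hsnd] at heq0
    have h0 : ((pSum G a l a : ℤ) : ℝ) = 0 := by exact_mod_cast heq0.symm
    rw [rpath_eq_of_false a l a hfalse, h0]

end Backward

section Dist

variable {V : Type*} [Fintype V] (G : V → V → Bool × EReal)

/-- costs of simple paths ending at `x` (including the trivial path) -/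
def SCosts (x : V) : Set ℝ :=
  insert 0 { r | ∃ a l, List.Chain (Efin G) a (l ++ [x]) ∧ (a :: (l ++ [x])).Nodup ∧
    r = rpath G a l x }

lemma SCosts_finite (x : V) : (SCosts G x).Finite := by
  have h1 : {p : V × List V | (p.1 :: (p.2 ++ [x])).Nodup}.Finite := by
    apply Set.Finite.subset
      ((Set.finite_univ (α := V)).prod (List.finite_length_le V (Fintype.card V)))
    intro p hp
    refine ⟨trivial, ?_⟩
    have h2 : (p.1 :: (p.2 ++ [x])).length ≤ Fintype.card V :=
      List.Nodup.length_le_card hp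
    simp only [List.length_cons, List.length_append, List.length_singleton] at h2
    simp only [Set.mem_setOf_eq]
    omega
  apply Set.Finite.insert
  apply Set.Finite.subset (h1.image (fun p => rpath G p.1 p.2 x))
  rintro r ⟨a, l, hc, hnd, rfl⟩
  exact ⟨(a, l), hnd, rfl⟩

noncomputable def dfun (x : V) : ℝ := sInf (SCosts G x)

lemma dfun_le {x : V} {r : ℝ} (h : r ∈ SCosts G x) : dfun G x ≤ r :=
  csInf_le (SCosts_finite G x).bddBelow h

lemma dfun_nonpos (x : V) : dfun G x ≤ 0 := dfun_le G (Set.mem_insert _ _)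

lemma dfun_mem (x : V) : dfun G x ∈ SCosts G x :=
  Set.Nonempty.csInf_mem ⟨0, Set.mem_insert _ _⟩ (SCosts_finite G x)

variable {G}

lemma rpath_split (a : V) (s : List V) (y : V) (t : List V) (b : V) :
    rpath G a (s ++ y :: t) b = rpath G a s y + rpath G y t b := by
  induction s generalizing a with
  | nil => rfl
  | cons c s ih =>
    show ecost G a c + rpath G c (s ++ y :: t) b = (ecost G a c + rpath G c s y) + rpath G y t b
    rw [ih c]; ring

lemma rpath_concat (a : V) (l : List V) (x b : V) :
    rpath G a (l ++ [x]) b = rpath G a l x + ecost G x b := by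
  have h := rpath_split (G := G) a l x [] b
  simpa [rpath] using h

lemma dfun_triangle
    (hG : ∀ x y : V, (∃ c : ℤ, (G x y).2 = ((c : ℝ) : EReal)) ∨ G x y = (true, ⊤))
    (hcyc : ∀ (a : V) (l : List V), wlt (true, (0 : EReal)) (pathW G a l a))
    {x y : V} (hxy : Efin G x y) :
    dfun G y ≤ dfun G x + ecost G x y := by
  have hxy1 : List.Chain (Efin G) x [y] := List.Chain.cons hxy List.Chain.nil
  rcases Set.mem_insert_iff.mp (dfun_mem G x) with h0 | ⟨a, l, hc, hnd, hr⟩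
  · by_cases hxe : x = y
    · subst hxe
      have h1 : 0 ≤ rpath G x [] x :=
        cycle_nonneg hG hcyc x [] hxy1 (List.nodup_singleton x)
      have h2 : rpath G x [] x = ecost G x x := rfl
      have := dfun_nonpos G x
      rw [h0]
      linarith [h2 ▸ h1]
    · have hmem : rpath G x [] y ∈ SCosts G y :=
        Set.mem_insert_iff.mpr (Or.inr ⟨x, [], hxy1, by simp [hxe], rfl⟩)
      have := dfun_le G hmem
      rw [h0]
      have h2 : rpath G x [] y = ecost G x y := rfl
      linarith
  · -- dfun x is realized by path a →l→ x
    by_cases hy : y ∈ a :: (l ++ [x])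
    · obtain ⟨s, t, hst⟩ := List.append_of_mem hy
      cases s with
      | nil =>
        -- y = a
        rw [List.nil_append] at hst
        obtain ⟨rfl, rfl⟩ : a = y ∧ l ++ [x] = t := by
          simpa using hst
        -- cycle a → l → x → a
        have hch : List.Chain (Efin G) a ((l ++ [x]) ++ [a]) := by
          rw [List.append_assoc, List.singleton_append]
          exact List.isChain_cons_split.mpr ⟨hc, hxy1⟩
        have hcy : 0 ≤ rpath G a (l ++ [x]) a := cycle_nonneg hG hcyc a (l ++ [x]) hch hnd
        rw [rpath_concat] at hcy
        have := dfun_nonpos G a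
        rw [hr]
        linarith
      | cons a' s' =>
        obtain ⟨rfl, hl⟩ := (List.cons.inj hst)
        rcases t.eq_nil_or_concat with rfl | ⟨t', x', rfl⟩
        · -- x = y
          obtain ⟨rfl, hx⟩ := List.append_inj' hl rfl
          obtain rfl : x = y := by simpa using hx
          have h1 : 0 ≤ rpath G x [] x :=
            cycle_nonneg hG hcyc x [] hxy1 (List.nodup_singleton x)
          have h2 : rpath G x [] x = ecost G x x := rfl
          linarith [h2 ▸ h1]
        · -- l = s' ++ y :: t', x = x'
          have hl' : l ++ [x] = (s' ++ y :: t') ++ [x'] := by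
            rw [hl]; simp
          obtain ⟨rfl, hx⟩ := List.append_inj' hl' rfl
          obtain rfl : x = x' := by simpa using hx
          -- chains
          have hc' : List.Chain (Efin G) a ((s' ++ [y]) ++ (t' ++ [x])) := by
            have : (s' ++ [y]) ++ (t' ++ [x]) = (s' ++ y :: t') ++ [x] := by simp
            rw [this]; exact hc
          rw [show (s' ++ [y]) ++ (t' ++ [x]) = s' ++ y :: (t' ++ [x]) by simp] at hc'
          obtain ⟨hc1, hc2⟩ := (List.isChain_cons_split (R := Efin G) (a := a) (l₁ := s') (c := y) (l₂ := t' ++ [x])).mp hc'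
          -- path a → s' → y is simple
          have hnd1 : (a :: (s' ++ [y])).Nodup := by
            refine List.Nodup.sublist (List.Sublist.cons₂ a ?_) hnd
            rw [show (s' ++ y :: t') ++ [x] = (s' ++ [y]) ++ (t' ++ [x]) by simp]
            exact (List.prefix_append _ _).sublist
          have hmem : rpath G a s' y ∈ SCosts G y :=
            Set.mem_insert_iff.mpr (Or.inr ⟨a, s', hc1, hnd1, rfl⟩)
          -- cycle y → t' → x → y
          have hch2 : List.Chain (Efin G) y ((t' ++ [x]) ++ [y]) := by
            rw [List.append_assoc, List.singleton_append]
            exact List.isChain_cons_split.mpr ⟨hc2, hxy1⟩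
          have hnd2 : (y :: (t' ++ [x])).Nodup := by
            refine List.Nodup.sublist ?_ hnd
            refine List.Sublist.trans ?_ (List.sublist_cons_self a _)
            rw [show (s' ++ y :: t') ++ [x] = s' ++ (y :: (t' ++ [x])) by simp]
            exact (List.suffix_append _ _).sublist
          have hcy : 0 ≤ rpath G y (t' ++ [x]) y := cycle_nonneg hG hcyc y (t' ++ [x]) hch2 hnd2
          rw [rpath_concat] at hcy
          -- split cost of path to x
          have hsp : rpath G a (s' ++ y :: t') x = rpath G a s' y + rpath G y t' x :=
            rpath_split a s' y t' x
          have := dfun_le G hmem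
          rw [hr, hsp]
          linarith
    · -- extend the path by the edge x → y
      have hch : List.Chain (Efin G) a ((l ++ [x]) ++ [y]) := by
        rw [List.append_assoc, List.singleton_append]
        exact List.isChain_cons_split.mpr ⟨hc, hxy1⟩
      have hnd' : (a :: ((l ++ [x]) ++ [y])).Nodup := by
        rw [show a :: ((l ++ [x]) ++ [y]) = (a :: (l ++ [x])) ++ [y] by simp]
        rw [List.nodup_append]
        exact ⟨hnd, List.nodup_singleton y, by
            simp [List.disjoint_singleton] at hy ⊢
            exact ⟨fun h => hy.1 h.symm, fun b hb hba => by subst hba; tauto⟩⟩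
      have hmem : rpath G a (l ++ [x]) y ∈ SCosts G y :=
        Set.mem_insert_iff.mpr (Or.inr ⟨a, l ++ [x], hch, hnd', rfl⟩)
      have := dfun_le G hmem
      rw [rpath_concat] at this
      rw [hr]
      linarith

end Dist

/-- A distance graph has a nonempty solution set iff it has no negative cycle:
`⟦G⟧ ≠ ∅` iff every cycle has weight sum strictly greater than `(<, 0)`. -/
theorem sem_nonempty_iff_no_negative_cycle {V : Type*} [Fintype V] (z : V)
    (G : V → V → Bool × EReal)
    (hG : ∀ x y : V, (∃ c : ℤ, (G x y).2 = ((c : ℝ) : EReal)) ∨ G x y = (true, ⊤)) :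
    (sem z G).Nonempty ↔
      ∀ (a : V) (l : List V), wlt (true, (0 : EReal)) (pathW G a l a) := by
  constructor
  · rintro ⟨v, hv0, hv⟩ a l
    have h := wsat_pathW hv a l a
    rw [sub_self] at h
    unfold wsat at h
    rw [EReal.coe_zero] at h
    unfold wlt
    rcases Bool.eq_false_or_eq_true (pathW G a l a).1 with hb | hb
    · rw [hb, if_pos rfl] at h
      exact Or.inl h
    · rw [hb, if_neg Bool.false_ne_true] at h
      rcases lt_or_eq_of_le h with h1 | h1
      · exact Or.inl h1
      · exact Or.inr ⟨h1, rfl, hb⟩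
  · intro hcyc
    refine ⟨fun x => dfun G x - dfun G z, by simp, ?_⟩
    intro x y
    rcases hG x y with ⟨c, hc⟩ | htop
    · have hfin : Efin G x y := by rw [Efin, hc]; exact EReal.coe_ne_top _
      have htri := dfun_triangle hG hcyc hfin
      have hspec := cInt_spec hG hfin
      unfold wsat
      have hd : (dfun G y - dfun G z) - (dfun G x - dfun G z) = dfun G y - dfun G x := by ring
      rw [hd, hspec]
      unfold ecost at htri
      split
      case isTrue hb =>
        rw [EReal.coe_lt_coe_iff]
        rw [if_pos hb] at htri
        have := eps_pos V
        linarith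
      case isFalse hb =>
        rw [EReal.coe_le_coe_iff]
        rw [if_neg hb] at htri
        linarith
    · unfold wsat
      rw [htop, if_pos rfl]
      exact EReal.coe_lt_top _
end

section
/- For every valuation v and LU-bounds function, the set of valuations satisfying the distance graph G⟨v⟩ (with edge y → x of weight (<, L(x−y)) when v(x) − v(y) < L(x−y), and weight (≤, v(x) − v(y)) when L(x−y) ≤ v(x) − v(y) ≤ U(x−y), and no constraint otherwise) equals the set { v' : v ⊑_LU v' } of valuations simulating v. -/
open Classical

/-- The distance graph `G⟨v⟩` for `⟨v⟩_LU`: the edge `y → x` has weight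
`(<, L(x-y))` if `v x - v y < L(x-y)`, weight `(≤, v x - v y)` if
`L(x-y) ≤ v x - v y ≤ U(x-y)`, and no constraint `(<, ∞)` otherwise. -/
noncomputable def Gv {X : Type*} (L U : X → X → EReal) (v : X → ℝ) (y x : X) :
    Bool × EReal :=
  if ((v x - v y : ℝ) : EReal) < L x y then (true, L x y)
  else if L x y ≤ ((v x - v y : ℝ) : EReal) ∧ ((v x - v y : ℝ) : EReal) ≤ U x y then
    (false, ((v x - v y : ℝ) : EReal))
  else (true, ⊤)

/-- The set of valuations satisfying the distance graph `G⟨v⟩` is exactly the set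
`{ v' : v ⊑_LU v' }` of valuations simulating `v`. -/
theorem sem_Gv_eq_up {X : Type*} (z : X) (L U : X → X → EReal) (v : X → ℝ)
    (hv : v z = 0) (hvpos : ∀ x : X, 0 ≤ v x) :
    {v' : X → ℝ | v' z = 0 ∧ (∀ x : X, 0 ≤ v' x) ∧
        ∀ x y : X, x ≠ y → wsat (v' x - v' y) (Gv L U v y x)}
      = {v' : X → ℝ | v' z = 0 ∧ (∀ x : X, 0 ≤ v' x) ∧ LUsim L U v v'} := by
  ext v'
  simp only [Set.mem_setOf_eq]
  refine and_congr_right fun _ => and_congr_right fun _ => ?_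
  unfold LUsim Gv wsat
  refine forall_congr' fun x => forall_congr' fun y => forall_congr' fun hxy => ?_
  by_cases h1 : ((v x - v y : ℝ) : EReal) < L x y
  · rw [if_pos h1]
    simp only [if_true]
    exact ⟨fun h => ⟨fun _ => h, fun ⟨hL, _⟩ => absurd h1 (not_lt.mpr hL)⟩, fun h => h.1 h1⟩
  · rw [if_neg h1]
    by_cases h2 : L x y ≤ ((v x - v y : ℝ) : EReal) ∧ ((v x - v y : ℝ) : EReal) ≤ U x y
    · rw [if_pos h2]
      simp only [Bool.false_eq_true, if_false, EReal.coe_le_coe_iff]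
      exact ⟨fun h => ⟨fun hc => absurd hc h1, fun _ => h⟩, fun h => h.2 h2⟩
    · rw [if_neg h2]
      simp only [if_true]
      exact ⟨fun _ => ⟨fun hc => absurd hc h1, fun hc => absurd hc h2⟩,
        fun _ => EReal.coe_lt_top _⟩
end

section
/- If v ≼_M v' (with the M-bisimulation relation), then the tightness equivalence classes of v and v' coincide: for all clocks x, y, x ⊸* y holds in v iff x ⊸* y holds in v', where ⊸* is the reflexive-transitive closure of the relation x ⊸ y defined by −M ≤ v(y) − v(x) ≤ M. -/
/-- The relation `≼_M`. -/
def Msim {X : Type*} (M : ℕ) (v v' : X → ℝ) : Prop :=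
  ∀ x y : X, x ≠ y →
    (v x - v y < -(M : ℝ) ∧ v' x - v' y < -(M : ℝ)) ∨
    (-(M : ℝ) ≤ v x - v y ∧ v x - v y = v' x - v' y ∧ v x - v y ≤ (M : ℝ)) ∨
    ((M : ℝ) < v x - v y ∧ (M : ℝ) < v' x - v' y)

/-- Clocks `x, y` are tight in `v` (written `x ⊸ y`) if `-M ≤ v y - v x ≤ M`. -/
def Tight {X : Type*} (M : ℕ) (v : X → ℝ) (x y : X) : Prop :=
  -(M : ℝ) ≤ v y - v x ∧ v y - v x ≤ (M : ℝ)

/-- If `v ≼_M v'` then the tightness equivalence classes coincide: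
`x ⊸* y` in `v` iff `x ⊸* y` in `v'`. -/
theorem Msim_tight_classes_eq {X : Type*} (M : ℕ) (v v' : X → ℝ)
    (h : Msim M v v') (x y : X) :
    Relation.ReflTransGen (Tight M v) x y ↔ Relation.ReflTransGen (Tight M v') x y := by
  have key : ∀ a b : X, Tight M v a b ↔ Tight M v' a b := by
    intro a b
    by_cases hab : b = a
    · subst hab
      simp [Tight, neg_nonpos, Nat.cast_nonneg]
    · rcases h b a hab with ⟨h1, h2⟩ | ⟨h1, h2, h3⟩ | ⟨h1, h2⟩
      · constructor <;> rintro ⟨t1, t2⟩ <;> [linarith; linarith]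
      · constructor <;> rintro ⟨t1, t2⟩ <;> constructor <;> linarith
      · constructor <;> rintro ⟨t1, t2⟩ <;> [linarith; linarith]
  constructor
  · exact Relation.ReflTransGen.mono (fun a b hab => (key a b).mp hab) x y
  · exact Relation.ReflTransGen.mono (fun a b hab => (key a b).mpr hab) x y
end

section
/- Let Z be a nonempty topologically closed zone with canonical distance graph G_Z, and let E = {y₁ → x₁, …, y_k → x_k} be a set of edges with pairwise distinct endpoints (all 2k vertices distinct) such that for each i the reverse edge x_i → y_i has finite weight in G_Z. Then the minimum over v ∈ Z of Σᵢ (v(xᵢ) − v(yᵢ)) is attained, and it is attained by an integral valuation v ∈ Z. -/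
open intervalIntegral MeasureTheory

set_option maxHeartbeats 1000000

/-- The zone defined by a (topologically closed) distance graph `G` over clocks `X`
with zero clock `z`: the edge `x → y` with finite weight `c` means `v y - v x ≤ c`
(weight `⊤` means no constraint). -/
def zoneSem {X : Type*} (z : X) (G : X → X → WithTop ℤ) : Set (X → ℝ) :=
  {v | v z = 0 ∧ ∀ x y : X, ∀ c : ℤ, G x y = (c : WithTop ℤ) → v y - v x ≤ (c : ℝ)}

/-- Shifted floor of a valuation stays in the zone. -/
lemma floor_mem_zone {X : Type*} (z : X) (G : X → X → WithTop ℤ) {v : X → ℝ}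
    (hv : v ∈ zoneSem z G) {t : ℝ} (ht : t ∈ Set.Ico (0:ℝ) 1) :
    (fun x => ((⌊v x + t⌋ : ℤ) : ℝ)) ∈ zoneSem z G := by
  constructor
  · show ((⌊v z + t⌋ : ℤ) : ℝ) = 0
    have h0 : v z + t = t := by rw [hv.1]; ring
    rw [h0]
    exact_mod_cast congrArg (Int.cast : ℤ → ℝ) (Int.floor_eq_zero_iff.mpr ht)
  · intro x y c hc
    have h := hv.2 x y c hc
    have h2 : v y + t ≤ (v x + t) + (c : ℝ) := by linarith
    have h3 : ⌊v y + t⌋ ≤ ⌊v x + t⌋ + c := by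
      have h4 := Int.floor_mono h2
      rwa [Int.floor_add_intCast] at h4
    have h5 : ((⌊v y + t⌋ : ℤ) : ℝ) ≤ ((⌊v x + t⌋ + c : ℤ) : ℝ) := by exact_mod_cast h3
    push_cast at h5 ⊢
    linarith

/-- The cast floor `t ↦ (⌊a + t⌋ : ℝ)` is interval integrable. -/
lemma floor_add_intervalIntegrable (a : ℝ) :
    IntervalIntegrable (fun t => ((⌊a + t⌋ : ℤ) : ℝ)) volume 0 1 := by
  have hmono : Monotone (fun t : ℝ => ((⌊a + t⌋ : ℤ) : ℝ)) := by
    intro s t hst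
    show ((⌊a + s⌋ : ℤ) : ℝ) ≤ ((⌊a + t⌋ : ℤ) : ℝ)
    exact_mod_cast Int.floor_mono (by linarith : a + s ≤ a + t)
  exact hmono.intervalIntegrable

/-- Integral of the shifted floor over a unit interval. -/
lemma integral_floor_add (a : ℝ) :
    (∫ t in (0:ℝ)..1, ((⌊a + t⌋ : ℤ) : ℝ)) = a := by
  have hid : IntervalIntegrable (fun t => a + t) volume 0 1 :=
    (continuous_const.add continuous_id).intervalIntegrable 0 1
  have hfr_int : IntervalIntegrable (fun t => Int.fract (a + t)) volume 0 1 := by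
    have he : (fun t => Int.fract (a + t)) = fun t => (a + t) - ((⌊a + t⌋ : ℤ) : ℝ) := by
      funext t; rw [← Int.self_sub_floor]
    rw [he]; exact hid.sub (floor_add_intervalIntegrable a)
  have key : (∫ t in (0:ℝ)..1, Int.fract (a + t)) = 1/2 := by
    have h1 : (∫ t in (0:ℝ)..1, Int.fract (a + t)) = ∫ s in (a+0)..(a+1), Int.fract s :=
      intervalIntegral.integral_comp_add_left (fun s => Int.fract s) a
    have h1' : ((a:ℝ)+0) = a := by ring
    have h2 : (∫ s in (a:ℝ)..(a+1), Int.fract s) = ∫ s in (0:ℝ)..(0+1), Int.fract s :=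
      (Int.fract_periodic ℝ).intervalIntegral_add_eq a 0
    have h2' : ((0:ℝ)+1) = 1 := by ring
    have h3 : (∫ s in (0:ℝ)..1, Int.fract s) = ∫ s in (0:ℝ)..1, s := by
      apply intervalIntegral.integral_congr_ae
      have hae : ∀ᵐ s : ℝ, s ≠ 1 := by
        rw [MeasureTheory.ae_iff]
        have hset : {s : ℝ | ¬ s ≠ 1} = {1} := by ext s; simp
        rw [hset]
        exact Real.volume_singleton
      filter_upwards [hae] with s hs hmem
      rw [Set.uIoc_of_le (by norm_num : (0:ℝ) ≤ 1)] at hmem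
      exact Int.fract_eq_self.mpr ⟨le_of_lt hmem.1, lt_of_le_of_ne hmem.2 hs⟩
    rw [h1, h1', h2, h2', h3, integral_id]
    norm_num
  have hsplit : (∫ t in (0:ℝ)..1, ((⌊a + t⌋ : ℤ) : ℝ))
      = (∫ t in (0:ℝ)..1, (a + t)) - ∫ t in (0:ℝ)..1, Int.fract (a + t) := by
    rw [← intervalIntegral.integral_sub hid hfr_int]
    apply intervalIntegral.integral_congr
    intro t _
    show ((⌊a + t⌋ : ℤ) : ℝ) = (a + t) - Int.fract (a + t)
    rw [← Int.self_sub_floor (a + t)]; ring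
  have hlin : (∫ t in (0:ℝ)..1, (a + t)) = a + 1/2 := by
    rw [intervalIntegral.integral_comp_add_left (fun s => s) a, integral_id]
    ring
  rw [hsplit, hlin, key]
  ring

/-- Let `Z` be a nonempty topologically closed zone with canonical distance graph `G`,
and let `E` be a set of edges `y → x` with pairwise distinct endpoints, such that for
each edge `(y, x) ∈ E` the reverse edge `x → y` has finite weight in `G`.  Then the
minimum over `v ∈ Z` of `∑_{(y,x) ∈ E} (v x - v y)` is attained by an integral
valuation `v ∈ Z`. -/
theorem minsum_attained_by_integral_valuation {X : Type*} [DecidableEq X] (z : X)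
    (G : X → X → WithTop ℤ)
    (hcanon : ∀ x y w : X, G x w ≤ G x y + G y w)
    (hne : (zoneSem z G).Nonempty)
    (E : Finset (X × X))
    (hloop : ∀ e ∈ E, e.1 ≠ e.2)
    (hdisj : ∀ e ∈ E, ∀ e' ∈ E, e ≠ e' →
      e.1 ≠ e'.1 ∧ e.1 ≠ e'.2 ∧ e.2 ≠ e'.1 ∧ e.2 ≠ e'.2)
    (hrev : ∀ e ∈ E, G e.2 e.1 ≠ ⊤) :
    ∃ v ∈ zoneSem z G, (∀ x : X, ∃ n : ℤ, v x = (n : ℝ)) ∧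
      ∀ u ∈ zoneSem z G,
        ∑ e ∈ E, (v e.2 - v e.1) ≤ ∑ e ∈ E, (u e.2 - u e.1) := by
  classical
  obtain ⟨v₀, hv₀⟩ := hne
  -- the finite reverse weights
  set c : X × X → ℤ := fun e => WithTop.untopD 0 (G e.2 e.1) with hc
  have hcw : ∀ e ∈ E, G e.2 e.1 = ((c e : ℤ) : WithTop ℤ) := by
    intro e he
    cases h : G e.2 e.1 with
    | top => exact absurd h (hrev e he)
    | coe a => simp [hc, h]
  -- lower bound for the objective on the whole zone
  have hlb : ∀ u ∈ zoneSem z G, ((-∑ e ∈ E, c e : ℤ) : ℝ) ≤ ∑ e ∈ E, (u e.2 - u e.1) := by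
    intro u hu
    have h1 : ∀ e ∈ E, (-(c e) : ℝ) ≤ u e.2 - u e.1 := by
      intro e he
      have := hu.2 e.2 e.1 (c e) (hcw e he)
      linarith
    have h2 : ∑ e ∈ E, (-(c e) : ℝ) ≤ ∑ e ∈ E, (u e.2 - u e.1) := Finset.sum_le_sum h1
    have h3 : ((-∑ e ∈ E, c e : ℤ) : ℝ) = ∑ e ∈ E, (-(c e) : ℝ) := by
      push_cast
      exact (Finset.sum_neg_distrib _).symm
    rw [h3]; exact h2
  -- the predicate: n is an objective value attained by an integral valuation
  have Hinh : ∃ n : ℤ, ∃ v ∈ zoneSem z G, (∀ x : X, ∃ m : ℤ, v x = (m : ℝ)) ∧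
      ∑ e ∈ E, (v e.2 - v e.1) = (n : ℝ) := by
    refine ⟨∑ e ∈ E, (⌊v₀ e.2 + 0⌋ - ⌊v₀ e.1 + 0⌋),
      fun x => ((⌊v₀ x + 0⌋ : ℤ) : ℝ),
      floor_mem_zone z G hv₀ (by norm_num), fun x => ⟨⌊v₀ x + 0⌋, rfl⟩, ?_⟩
    push_cast
    rfl
  have Hbdd : ∃ b : ℤ, ∀ n : ℤ, (∃ v ∈ zoneSem z G, (∀ x : X, ∃ m : ℤ, v x = (m : ℝ)) ∧
      ∑ e ∈ E, (v e.2 - v e.1) = (n : ℝ)) → b ≤ n := by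
    refine ⟨-∑ e ∈ E, c e, ?_⟩
    rintro n ⟨v, hv, -, hveq⟩
    have := hlb v hv
    rw [hveq] at this
    exact_mod_cast this
  obtain ⟨lb, ⟨v, hvz, hvint, hveq⟩, hmin⟩ := Int.exists_least_of_bdd Hbdd Hinh
  refine ⟨v, hvz, hvint, ?_⟩
  intro u hu
  rw [hveq]
  -- key: some integer shift of the floor of `u` does at least as well as `u`
  have hex : ∃ t ∈ Set.Ico (0:ℝ) 1,
      ((∑ e ∈ E, (⌊u e.2 + t⌋ - ⌊u e.1 + t⌋) : ℤ) : ℝ) ≤ ∑ e ∈ E, (u e.2 - u e.1) := by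
    by_contra hcon
    push_neg at hcon
    set Su : ℝ := ∑ e ∈ E, (u e.2 - u e.1) with hSu
    -- the real-valued step function
    set g : ℝ → ℝ := fun t => ∑ e ∈ E, (((⌊u e.2 + t⌋ : ℤ) : ℝ) - ((⌊u e.1 + t⌋ : ℤ) : ℝ))
      with hg
    have hgN : ∀ t : ℝ, g t = ((∑ e ∈ E, (⌊u e.2 + t⌋ - ⌊u e.1 + t⌋) : ℤ) : ℝ) := by
      intro t; rw [hg]; push_cast; rfl
    have hg10 : g 1 = g 0 := by
      rw [hg]
      apply Finset.sum_congr rfl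
      intro e _
      have hstep : ∀ a : ℝ, ((⌊a + 1⌋ : ℤ) : ℝ) = ((⌊a + 0⌋ : ℤ) : ℝ) + 1 := by
        intro a
        rw [add_zero]
        have : ⌊a + (1:ℝ)⌋ = ⌊a⌋ + 1 := by exact_mod_cast Int.floor_add_intCast a 1
        rw [this]; push_cast; ring
      rw [hstep (u e.2), hstep (u e.1)]; ring
    -- pointwise bound on [0,1]
    have hIcc : ∀ t ∈ Set.Icc (0:ℝ) 1, ((⌊Su⌋ + 1 : ℤ) : ℝ) ≤ g t := by
      have h01 : ∀ t ∈ Set.Ico (0:ℝ) 1, ((⌊Su⌋ + 1 : ℤ) : ℝ) ≤ g t := by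
        intro t ht
        have h1 := hcon t ht
        rw [← hgN t] at h1
        have h2 : Su < g t := h1
        have h3 : (⌊Su⌋ : ℤ) < (∑ e ∈ E, (⌊u e.2 + t⌋ - ⌊u e.1 + t⌋) : ℤ) := by
          apply Int.floor_lt.mpr
          rw [← hgN t]; exact h2
        have h4 : (⌊Su⌋ + 1 : ℤ) ≤ (∑ e ∈ E, (⌊u e.2 + t⌋ - ⌊u e.1 + t⌋) : ℤ) := h3
        rw [hgN t]
        exact_mod_cast h4
      intro t ht
      rcases lt_or_eq_of_le ht.2 with h | h
      · exact h01 t ⟨ht.1, h⟩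
      · rw [h, hg10]
        exact h01 0 (by norm_num)
    -- integrability
    have hgint : IntervalIntegrable g volume 0 1 := by
      have : g = ∑ e ∈ E, fun t =>
          (((⌊u e.2 + t⌋ : ℤ) : ℝ) - ((⌊u e.1 + t⌋ : ℤ) : ℝ)) := by
        funext t
        rw [hg, Finset.sum_apply]
      rw [this]
      exact IntervalIntegrable.sum E (fun e _ =>
        (floor_add_intervalIntegrable (u e.2)).sub (floor_add_intervalIntegrable (u e.1)))
    -- the integral of g equals Su
    have hgval : (∫ t in (0:ℝ)..1, g t) = Su := by
      have hfs := intervalIntegral.integral_finset_sum (μ := MeasureTheory.volume)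
        (a := (0:ℝ)) (b := (1:ℝ)) (s := E)
        (f := fun e (t : ℝ) => (((⌊u e.2 + t⌋ : ℤ) : ℝ) - ((⌊u e.1 + t⌋ : ℤ) : ℝ)))
        (fun e _ =>
          (floor_add_intervalIntegrable (u e.2)).sub (floor_add_intervalIntegrable (u e.1)))
      simp only [hg]
      rw [hfs]
      simp only [hSu]
      apply Finset.sum_congr rfl
      intro e _
      rw [intervalIntegral.integral_sub (floor_add_intervalIntegrable (u e.2))
        (floor_add_intervalIntegrable (u e.1)), integral_floor_add, integral_floor_add]
    -- contradiction via monotonicity of the integral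
    have hmono := intervalIntegral.integral_mono_on (by norm_num : (0:ℝ) ≤ 1)
      (_root_.intervalIntegrable_const (c := ((⌊Su⌋ + 1 : ℤ) : ℝ))) hgint hIcc
    rw [hgval, intervalIntegral.integral_const] at hmono
    simp only [smul_eq_mul] at hmono
    have hfl : Su < ((⌊Su⌋ : ℤ) : ℝ) + 1 := Int.lt_floor_add_one Su
    push_cast at hmono
    linarith
  obtain ⟨t, ht, hle⟩ := hex
  have hwz := floor_mem_zone z G hu ht
  have hP : ∃ w ∈ zoneSem z G, (∀ x : X, ∃ m : ℤ, w x = (m : ℝ)) ∧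
      ∑ e ∈ E, (w e.2 - w e.1) =
        ((∑ e ∈ E, (⌊u e.2 + t⌋ - ⌊u e.1 + t⌋) : ℤ) : ℝ) := by
    refine ⟨fun x => ((⌊u x + t⌋ : ℤ) : ℝ), hwz, fun x => ⟨⌊u x + t⌋, rfl⟩, ?_⟩
    push_cast
    rfl
  have h5 := hmin _ hP
  have h6 : ((lb : ℤ) : ℝ) ≤ ((∑ e ∈ E, (⌊u e.2 + t⌋ - ⌊u e.1 + t⌋) : ℤ) : ℝ) := by
    exact_mod_cast h5
  linarith
end
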